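/- Let K ⊆ ℂ^p be a determining compact set and let (ξ_j)_{j≥0} be a pseudo Leja sequence for K with Edrei growth (M_j)_{j≥1}. Assume (as guaranteed by Zaharjuta's theorem on the transfinite diameter) that there exists D ≥ 0 such that lim_{d→∞} V_{h_d}(K)^{1/l_d} = D and lim_{d→∞} (∏_{j=1}^{h_d−1} θ_j(K))^{1/l_d} = D. Then lim_{d→∞} |vdm(ξ_0,…,ξ_{h_d−1})|^{1/l_d} = D, i.e. the pseudo Leja sequence recovers the transfinite diameter D = D(K) of K. -/

import Mathlib

open scoped BigOperators
open Filter

namespace PseudoLeja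

/-- Graded lexicographic strict order on multi-indices in `ℕ^p`:
`α ≺ β` iff `|α| < |β|`, or `|α| = |β|` and the leftmost nonzero entry of `α - β`
is negative (i.e. at the first index where they differ, `α` is smaller). -/
def GLexLT {p : ℕ} (α β : Fin p → ℕ) : Prop :=
  (∑ i, α i) < (∑ i, β i) ∨
    ((∑ i, α i) = (∑ i, β i) ∧ ∃ k, (∀ i, i < k → α i = β i) ∧ α k < β k)

/-- `κ : ℕ → ℕ^p` is the (unique) enumeration of all multi-indices that is strictly
increasing from the usual order on `ℕ` to the graded lexicographic order. -/
def IsGLexEnum {p : ℕ} (κ : ℕ → Fin p → ℕ) : Prop :=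
  Function.Bijective κ ∧ ∀ m n : ℕ, m < n → GLexLT (κ m) (κ n)

/-- The `N`-th monomial `e_N(z) = z^{κ(N)}`. -/
noncomputable def mono {p : ℕ} (κ : ℕ → Fin p → ℕ) (N : ℕ) (z : Fin p → ℂ) : ℂ :=
  ∏ i, z i ^ κ N i

/-- Vandermonde determinant of the points `ξ 0, …, ξ (n-1)`:
`vdm κ n ξ = det [e_N(ξ_M)]_{0 ≤ M, N ≤ n-1}`. -/
noncomputable def vdm {p : ℕ} (κ : ℕ → Fin p → ℕ) (n : ℕ) (ξ : ℕ → Fin p → ℂ) : ℂ :=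
  Matrix.det (Matrix.of fun M N : Fin n => mono κ (N : ℕ) (ξ (M : ℕ)))

/-- A set `K ⊆ ℂ^p` is determining if no nonzero polynomial in `p` complex
variables vanishes identically on `K`. -/
def Determining {p : ℕ} (K : Set (Fin p → ℂ)) : Prop :=
  ∀ P : MvPolynomial (Fin p) ℂ, (∀ z ∈ K, MvPolynomial.eval z P = 0) → P = 0

/-- `h_d = C(p+d, d)`, the dimension of the space of polynomials of total degree
at most `d` in `p` variables. -/
def hdim (p d : ℕ) : ℕ := Nat.choose (p + d) d

/-- `l_d = p·C(p+d, p+1)`, the degree of the Vandermonde determinant of `h_d` points. -/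
def ldim (p d : ℕ) : ℕ := p * Nat.choose (p + d) (p + 1)

/-- `V_j(K)`, the maximal modulus of the Vandermonde determinant of `j` points of `K`. -/
noncomputable def Vsup {p : ℕ} (κ : ℕ → Fin p → ℕ) (K : Set (Fin p → ℂ)) (j : ℕ) : ℝ :=
  sSup { v : ℝ | ∃ ξ : ℕ → Fin p → ℂ, (∀ i, ξ i ∈ K) ∧ v = ‖vdm κ j ξ‖ }

/-- `(ξ_j)_{j≥0} ⊆ K` is a pseudo Leja sequence for `K` with Edrei growth `(M_j)_{j≥1}`:
`M_j ≥ 1`, `M_j·|vdm(ξ_0,…,ξ_j)| ≥ max_{z∈K} |vdm(ξ_0,…,ξ_{j-1},z)|` for `j ≥ 1`, and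
`lim_{d→∞} (max_{h_{d-1} ≤ j < h_d} M_j)^{1/d} = 1`. -/
def IsPseudoLeja {p : ℕ} (κ : ℕ → Fin p → ℕ) (K : Set (Fin p → ℂ))
    (ξ : ℕ → Fin p → ℂ) (M : ℕ → ℝ) : Prop :=
  (∀ j, ξ j ∈ K) ∧
  (∀ j, 1 ≤ j → 1 ≤ M j) ∧
  (∀ j, 1 ≤ j → ∀ z ∈ K,
    ‖vdm κ (j + 1) (Function.update ξ j z)‖ ≤
      M j * ‖vdm κ (j + 1) ξ‖) ∧
  Filter.Tendsto
    (fun d : ℕ => (sSup (M '' Set.Ico (hdim p (d - 1)) (hdim p d))) ^ ((d : ℝ)⁻¹))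
    Filter.atTop (nhds 1)

/-- `θ_j(K) = inf { max_{z∈K} |e_j(z) + ∑_{i<j} c_i e_i(z)| : c_0,…,c_{j-1} ∈ ℂ }`,
the `|κ(j)|`-th power of the `j`-th Chebyshev constant of `K`. -/
noncomputable def cheb {p : ℕ} (κ : ℕ → Fin p → ℕ) (K : Set (Fin p → ℂ)) (j : ℕ) : ℝ :=
  sInf { r : ℝ | ∃ c : ℕ → ℂ,
    r = sSup { s : ℝ | ∃ z ∈ K,
      s = ‖mono κ j z + ∑ i ∈ Finset.range j, c i * mono κ i z‖ } }

-- AUX START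
lemma kappa_zero {p : ℕ} {κ : ℕ → Fin p → ℕ} (hκ : IsGLexEnum κ) : κ 0 = 0 := by
  obtain ⟨⟨hinj, hsurj⟩, hmono⟩ := hκ
  obtain ⟨n, hn⟩ := hsurj 0
  rcases Nat.eq_zero_or_pos n with h | h
  · rwa [h] at hn
  · exfalso
    have h2 := hmono 0 n h
    rw [hn] at h2
    rcases h2 with h1 | ⟨h1, k, _, hk⟩
    · simp at h1
    · simp at hk

lemma mono_zero {p : ℕ} {κ : ℕ → Fin p → ℕ} (h0 : κ 0 = 0) (z : Fin p → ℂ) :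
    mono κ 0 z = 1 := by
  simp [mono, h0]

lemma vdm_zero {p : ℕ} (κ : ℕ → Fin p → ℕ) (ξ : ℕ → Fin p → ℂ) : vdm κ 0 ξ = 1 := by
  simp [vdm, Matrix.det_fin_zero]

lemma vdm_one {p : ℕ} {κ : ℕ → Fin p → ℕ} (h0 : κ 0 = 0) (ξ : ℕ → Fin p → ℂ) :
    vdm κ 1 ξ = 1 := by
  rw [vdm, Matrix.det_fin_one]
  simp [Matrix.of_apply, mono_zero h0]

lemma abs_det_le {n : ℕ} (A : Matrix (Fin n) (Fin n) ℂ) (B : Fin n → ℝ)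
    (hB : ∀ i j, ‖A i j‖ ≤ B j) :
    ‖A.det‖ ≤ (n.factorial : ℝ) * ∏ j, B j := by
  rw [Matrix.det_apply]
  have h1 : ‖∑ σ : Equiv.Perm (Fin n), Equiv.Perm.sign σ • ∏ i, A (σ i) i‖
      ≤ ∑ σ : Equiv.Perm (Fin n), ‖Equiv.Perm.sign σ • ∏ i, A (σ i) i‖ :=
    norm_sum_le _ _
  refine h1.trans ?_
  have h2 : ∀ σ : Equiv.Perm (Fin n),
      ‖Equiv.Perm.sign σ • ∏ i, A (σ i) i‖ ≤ ∏ j, B j := by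
    intro σ
    have habs : ‖Equiv.Perm.sign σ • ∏ i, A (σ i) i‖
        = ‖∏ i, A (σ i) i‖ := by
      rcases Int.units_eq_one_or (Equiv.Perm.sign σ) with h | h <;> simp [h]
    rw [habs, norm_prod]
    refine Finset.prod_le_prod (fun i _ => by positivity) (fun i _ => hB (σ i) i)
  calc ∑ σ : Equiv.Perm (Fin n), ‖Equiv.Perm.sign σ • ∏ i, A (σ i) i‖
      ≤ ∑ _σ : Equiv.Perm (Fin n), ∏ j, B j := Finset.sum_le_sum (fun σ _ => h2 σ)
    _ = (n.factorial : ℝ) * ∏ j, B j := by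
        rw [Finset.sum_const, Finset.card_univ, Fintype.card_perm, nsmul_eq_mul]
        simp [Fintype.card_fin]

lemma exists_vdm_bound {p : ℕ} (κ : ℕ → Fin p → ℕ) {K : Set (Fin p → ℂ)}
    (hKc : IsCompact K) (n : ℕ) :
    ∃ B : ℝ, ∀ ξ : ℕ → Fin p → ℂ, (∀ i, ξ i ∈ K) → ‖vdm κ n ξ‖ ≤ B := by
  obtain ⟨r, hr⟩ := hKc.isBounded.subset_closedBall 0
  refine ⟨(n.factorial : ℝ) * ∏ j : Fin n, (max 1 r) ^ (∑ i, κ (j : ℕ) i), fun ξ hξ => ?_⟩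
  refine abs_det_le _ _ fun M N => ?_
  have hz : ∀ i, ‖ξ (M : ℕ) i‖ ≤ max 1 r := by
    intro i
    have h1 : ξ (M : ℕ) ∈ Metric.closedBall (0 : Fin p → ℂ) r := hr (hξ _)
    rw [Metric.mem_closedBall, dist_zero_right] at h1
    calc ‖ξ (M : ℕ) i‖ = ‖ξ (M : ℕ) i‖ := rfl
      _ ≤ ‖ξ (M : ℕ)‖ := norm_le_pi_norm _ i
      _ ≤ r := h1
      _ ≤ max 1 r := le_max_right _ _
  calc ‖(Matrix.of fun M N : Fin n => mono κ (N : ℕ) (ξ (M : ℕ))) M N‖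
      = ∏ i, ‖ξ (M : ℕ) i‖ ^ κ (N : ℕ) i := by
        simp [Matrix.of_apply, mono, norm_prod, norm_pow]
    _ ≤ ∏ i, (max 1 r) ^ κ (N : ℕ) i :=
        Finset.prod_le_prod (fun i _ => by positivity)
          (fun i _ => pow_le_pow_left₀ (norm_nonneg _) (hz i) _)
    _ = (max 1 r) ^ (∑ i, κ (N : ℕ) i) := by rw [Finset.prod_pow_eq_pow_sum]

lemma abs_vdm_le_Vsup {p : ℕ} (κ : ℕ → Fin p → ℕ) {K : Set (Fin p → ℂ)}
    (hKc : IsCompact K) {ξ : ℕ → Fin p → ℂ} (hξ : ∀ i, ξ i ∈ K) (n : ℕ) :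
    ‖vdm κ n ξ‖ ≤ Vsup κ K n := by
  obtain ⟨B, hB⟩ := exists_vdm_bound κ hKc n
  refine le_csSup ⟨B, ?_⟩ ⟨ξ, hξ, rfl⟩
  rintro v ⟨ξ', hξ', rfl⟩
  exact hB ξ' hξ'

lemma determining_nonempty {p : ℕ} {K : Set (Fin p → ℂ)} (hKd : Determining K) :
    K.Nonempty := by
  by_contra h
  rw [Set.not_nonempty_iff_eq_empty] at h
  have h1 := hKd 1 (by simp [h])
  simpa using h1

lemma cheb_nonneg {p : ℕ} (κ : ℕ → Fin p → ℕ) (K : Set (Fin p → ℂ)) (j : ℕ) :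
    0 ≤ cheb κ K j := by
  refine Real.sInf_nonneg fun r hr => ?_
  obtain ⟨c, rfl⟩ := hr
  refine Real.sSup_nonneg fun s hs => ?_
  obtain ⟨z, _, rfl⟩ := hs
  positivity

lemma Vsup_nonneg {p : ℕ} (κ : ℕ → Fin p → ℕ) (K : Set (Fin p → ℂ)) (n : ℕ) :
    0 ≤ Vsup κ K n :=
  Real.sSup_nonneg fun v hv => by obtain ⟨ξ', _, rfl⟩ := hv; positivity

lemma vdm_update_expand {p : ℕ} (κ : ℕ → Fin p → ℕ) (j : ℕ) (ξ : ℕ → Fin p → ℂ) :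
    ∃ c : ℕ → ℂ, ∀ z : Fin p → ℂ,
      vdm κ (j + 1) (Function.update ξ j z) =
        vdm κ j ξ * mono κ j z + ∑ i ∈ Finset.range j, c i * mono κ i z := by
  classical
  let minor : Fin (j + 1) → ℂ := fun N =>
    Matrix.det (Matrix.of fun M N' : Fin j =>
      mono κ ((N.succAbove N' : Fin (j + 1)) : ℕ) (ξ (M : ℕ)))
  refine ⟨fun i => if h : i < j then (-1 : ℂ) ^ (j + i) * minor ⟨i, Nat.lt_succ_of_lt h⟩ else 0,
    fun z => ?_⟩
  set A : Matrix (Fin (j + 1)) (Fin (j + 1)) ℂ :=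
    Matrix.of fun M N : Fin (j + 1) => mono κ (N : ℕ) (Function.update ξ j z (M : ℕ)) with hA
  have hrow : ∀ N : Fin (j + 1), A (Fin.last j) N = mono κ (N : ℕ) z := by
    intro N
    rw [hA]
    simp [Matrix.of_apply, Fin.val_last]
  have hsub : ∀ N : Fin (j + 1),
      A.submatrix (Fin.last j).succAbove N.succAbove =
        Matrix.of fun M N' : Fin j =>
          mono κ ((N.succAbove N' : Fin (j + 1)) : ℕ) (ξ (M : ℕ)) := by
    intro N
    ext M N'
    rw [Matrix.submatrix_apply, hA]
    simp only [Matrix.of_apply, Fin.succAbove_last]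
    rw [Function.update_of_ne]
    simp only [Fin.coe_castSucc]
    exact Nat.ne_of_lt M.isLt
  have hsubdet : ∀ N : Fin (j + 1),
      (A.submatrix (Fin.last j).succAbove N.succAbove).det = minor N := by
    intro N
    rw [hsub N]
  have hlastminor : minor (Fin.last j) = vdm κ j ξ := by
    show Matrix.det _ = vdm κ j ξ
    rw [vdm]
    congr 1
    ext M N'
    simp [Fin.succAbove_last]
  have hvdm : vdm κ (j + 1) (Function.update ξ j z) = A.det := rfl
  rw [hvdm, Matrix.det_succ_row A (Fin.last j), Fin.sum_univ_castSucc]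
  have hlast : (-1 : ℂ) ^ ((Fin.last j : ℕ) + ((Fin.last j : Fin (j + 1)) : ℕ)) *
      A (Fin.last j) (Fin.last j) *
      (A.submatrix (Fin.last j).succAbove (Fin.last j).succAbove).det
      = vdm κ j ξ * mono κ j z := by
    rw [hrow, hsubdet, hlastminor]
    have hsign : (-1 : ℂ) ^ ((Fin.last j : ℕ) + ((Fin.last j : Fin (j + 1)) : ℕ)) = 1 :=
      Even.neg_one_pow ⟨(Fin.last j : ℕ), rfl⟩
    rw [hsign, one_mul, Fin.val_last, mul_comm]
  rw [hlast, add_comm]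
  congr 1
  rw [Finset.sum_range fun i =>
    (if h : i < j then (-1 : ℂ) ^ (j + i) * minor ⟨i, Nat.lt_succ_of_lt h⟩ else 0) * mono κ i z]
  refine Finset.sum_congr rfl fun i _ => ?_
  rw [hrow, hsubdet]
  have hival : ((Fin.castSucc i : Fin (j + 1)) : ℕ) = (i : ℕ) := rfl
  rw [hival, dif_pos i.isLt]
  have hcast : (⟨(i : ℕ), Nat.lt_succ_of_lt i.isLt⟩ : Fin (j + 1)) = Fin.castSucc i := by
    ext; rfl
  rw [hcast, Fin.val_last]
  ring

lemma eval_monomial_eq {p : ℕ} (κ : ℕ → Fin p → ℕ) (i : ℕ) (z : Fin p → ℂ) (a : ℂ) :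
    MvPolynomial.eval z (MvPolynomial.monomial (Finsupp.equivFunOnFinite.symm (κ i)) a)
      = a * mono κ i z := by
  rw [MvPolynomial.eval_monomial, mono]
  congr 1
  rw [Finsupp.prod_fintype]
  · exact Finset.prod_congr rfl fun x _ => by simp
  · intro x; exact pow_zero _

lemma exists_nonzero {p : ℕ} {κ : ℕ → Fin p → ℕ} (hκ : IsGLexEnum κ)
    {K : Set (Fin p → ℂ)} (hKd : Determining K)
    {j : ℕ} {a : ℂ} (ha : a ≠ 0) (c : ℕ → ℂ) :
    ∃ z ∈ K, a * mono κ j z + ∑ i ∈ Finset.range j, c i * mono κ i z ≠ 0 := by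
  classical
  set toF : (Fin p → ℕ) → (Fin p →₀ ℕ) := ⇑((Finsupp.equivFunOnFinite (α := Fin p) (M := ℕ)).symm) with htoF
  set P : MvPolynomial (Fin p) ℂ :=
    MvPolynomial.monomial (toF (κ j)) a +
      ∑ i ∈ Finset.range j, MvPolynomial.monomial (toF (κ i)) (c i) with hP
  have hPne : P ≠ 0 := by
    intro h0
    have hcoeff : MvPolynomial.coeff (toF (κ j)) P = a := by
      rw [hP, MvPolynomial.coeff_add, MvPolynomial.coeff_monomial, if_pos rfl]
      have : ∀ i ∈ Finset.range j,
          MvPolynomial.coeff (toF (κ j)) (MvPolynomial.monomial (toF (κ i)) (c i)) = 0 := by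
        intro i hi
        rw [MvPolynomial.coeff_monomial, if_neg]
        intro heq
        have hκeq : κ i = κ j := Finsupp.equivFunOnFinite.symm.injective heq
        have : i = j := hκ.1.1 hκeq
        exact absurd this (Nat.ne_of_lt (Finset.mem_range.mp hi))
      rw [MvPolynomial.coeff_sum, Finset.sum_eq_zero this, add_zero]
    rw [h0] at hcoeff
    simp at hcoeff
    exact ha hcoeff.symm
  by_contra h
  push_neg at h
  refine hPne (hKd P fun z hz => ?_)
  have heval : MvPolynomial.eval z P
      = a * mono κ j z + ∑ i ∈ Finset.range j, c i * mono κ i z := by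
    rw [hP, map_add, eval_monomial_eq, map_sum]
    congr 1
    exact Finset.sum_congr rfl fun i _ => eval_monomial_eq κ i z (c i)
  rw [heval]
  exact h z hz

lemma vdm_ne_zero {p : ℕ} {κ : ℕ → Fin p → ℕ} (hκ : IsGLexEnum κ)
    {K : Set (Fin p → ℂ)} (hKd : Determining K)
    {ξ : ℕ → Fin p → ℂ} {M : ℕ → ℝ} (hmem : ∀ j, ξ j ∈ K)
    (hineq : ∀ j, 1 ≤ j → ∀ z ∈ K,
      ‖vdm κ (j + 1) (Function.update ξ j z)‖ ≤
        M j * ‖vdm κ (j + 1) ξ‖) :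
    ∀ n, vdm κ n ξ ≠ 0 := by
  intro n
  induction n with
  | zero => rw [vdm_zero]; exact one_ne_zero
  | succ k ih =>
    rcases Nat.eq_zero_or_pos k with rfl | hk
    · rw [vdm_one (kappa_zero hκ)]; exact one_ne_zero
    · obtain ⟨c, hc⟩ := vdm_update_expand κ k ξ
      obtain ⟨z, hz, hnz⟩ := exists_nonzero hκ hKd ih c
      rw [← hc z] at hnz
      have h1 := hineq k hk z hz
      have h2 : 0 < ‖vdm κ (k + 1) (Function.update ξ k z)‖ :=
        norm_pos_iff.mpr hnz
      intro h0
      rw [h0] at h1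
      simp at h1
      exact hnz h1

lemma cheb_step {p : ℕ} {κ : ℕ → Fin p → ℕ}
    {K : Set (Fin p → ℂ)} {ξ : ℕ → Fin p → ℂ} {M : ℕ → ℝ}
    (hineq : ∀ j, 1 ≤ j → ∀ z ∈ K,
      ‖vdm κ (j + 1) (Function.update ξ j z)‖ ≤
        M j * ‖vdm κ (j + 1) ξ‖)
    {j : ℕ} (hj : 1 ≤ j) (hMj : 0 ≤ M j) (hne : vdm κ j ξ ≠ 0) :
    cheb κ K j * ‖vdm κ j ξ‖ ≤ M j * ‖vdm κ (j + 1) ξ‖ := by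
  classical
  obtain ⟨c, hc⟩ := vdm_update_expand κ j ξ
  have hvpos : 0 < ‖vdm κ j ξ‖ := norm_pos_iff.mpr hne
  set c' : ℕ → ℂ := fun i => c i / vdm κ j ξ with hc'
  have hexpr : ∀ z : Fin p → ℂ,
      mono κ j z + ∑ i ∈ Finset.range j, c' i * mono κ i z
        = vdm κ (j + 1) (Function.update ξ j z) / vdm κ j ξ := by
    intro z
    rw [eq_div_iff hne, add_mul, Finset.sum_mul, hc z]
    congr 1
    · exact mul_comm _ _
    · refine Finset.sum_congr rfl fun i _ => ?_
      rw [hc']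
      field_simp
  have hbound : ∀ z ∈ K,
      ‖mono κ j z + ∑ i ∈ Finset.range j, c' i * mono κ i z‖
        ≤ M j * ‖vdm κ (j + 1) ξ‖ / ‖vdm κ j ξ‖ := by
    intro z hz
    rw [hexpr z, norm_div]
    exact div_le_div_of_nonneg_right (hineq j hj z hz) hvpos.le
  have hrhs0 : 0 ≤ M j * ‖vdm κ (j + 1) ξ‖ / ‖vdm κ j ξ‖ :=
    div_nonneg (mul_nonneg hMj (norm_nonneg _)) (norm_nonneg _)
  have h1 : cheb κ K j ≤
      sSup { s : ℝ | ∃ z ∈ K,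
        s = ‖mono κ j z + ∑ i ∈ Finset.range j, c' i * mono κ i z‖ } := by
    apply csInf_le
    · refine ⟨0, ?_⟩
      rintro r ⟨c'', rfl⟩
      exact Real.sSup_nonneg fun s hs => by obtain ⟨z, _, rfl⟩ := hs; positivity
    · exact ⟨c', rfl⟩
  have h2 : sSup { s : ℝ | ∃ z ∈ K,
        s = ‖mono κ j z + ∑ i ∈ Finset.range j, c' i * mono κ i z‖ }
      ≤ M j * ‖vdm κ (j + 1) ξ‖ / ‖vdm κ j ξ‖ := by
    refine Real.sSup_le ?_ hrhs0
    rintro s ⟨z, hz, rfl⟩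
    exact hbound z hz
  calc cheb κ K j * ‖vdm κ j ξ‖
      ≤ (M j * ‖vdm κ (j + 1) ξ‖ / ‖vdm κ j ξ‖) *
          ‖vdm κ j ξ‖ :=
        mul_le_mul_of_nonneg_right (h1.trans h2) (norm_nonneg _)
    _ = M j * ‖vdm κ (j + 1) ξ‖ := div_mul_cancel₀ _ (ne_of_gt hvpos)

lemma telescope {p : ℕ} {κ : ℕ → Fin p → ℕ} (hκ : IsGLexEnum κ)
    {K : Set (Fin p → ℂ)} (hKd : Determining K)
    {ξ : ℕ → Fin p → ℂ} {M : ℕ → ℝ} (hmem : ∀ j, ξ j ∈ K)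
    (hM1 : ∀ j, 1 ≤ j → 1 ≤ M j)
    (hineq : ∀ j, 1 ≤ j → ∀ z ∈ K,
      ‖vdm κ (j + 1) (Function.update ξ j z)‖ ≤
        M j * ‖vdm κ (j + 1) ξ‖) :
    ∀ n, (∏ j ∈ Finset.Ico 1 n, cheb κ K j) ≤
      (∏ j ∈ Finset.Ico 1 n, M j) * ‖vdm κ n ξ‖ := by
  intro n
  induction n with
  | zero => simp [vdm_zero]
  | succ k ih =>
    rcases Nat.eq_zero_or_pos k with rfl | hk
    · simp [vdm_one (kappa_zero hκ)]
    · rw [Finset.prod_Ico_succ_top hk, Finset.prod_Ico_succ_top hk]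
      have hprodM : 0 ≤ ∏ j ∈ Finset.Ico 1 k, M j :=
        Finset.prod_nonneg fun j hj =>
          le_trans zero_le_one (hM1 j (Finset.mem_Ico.mp hj).1)
      have hstep := cheb_step hineq hk
        (le_trans zero_le_one (hM1 k hk)) (vdm_ne_zero hκ hKd hmem hineq k)
      calc (∏ j ∈ Finset.Ico 1 k, cheb κ K j) * cheb κ K k
          ≤ ((∏ j ∈ Finset.Ico 1 k, M j) * ‖vdm κ k ξ‖) * cheb κ K k :=
            mul_le_mul_of_nonneg_right ih (cheb_nonneg κ K k)
        _ = (∏ j ∈ Finset.Ico 1 k, M j) * (cheb κ K k * ‖vdm κ k ξ‖) := by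
            ring
        _ ≤ (∏ j ∈ Finset.Ico 1 k, M j) *
              (M k * ‖vdm κ (k + 1) ξ‖) :=
            mul_le_mul_of_nonneg_left hstep hprodM
        _ = ((∏ j ∈ Finset.Ico 1 k, M j) * M k) * ‖vdm κ (k + 1) ξ‖ := by
            ring

lemma hdim_zero (p : ℕ) : hdim p 0 = 1 := Nat.choose_zero_right _

lemma hdim_succ (p d : ℕ) : hdim p (d + 1) = Nat.choose (p + d) (d + 1) + hdim p d := by
  have h := Nat.choose_succ_succ (p + d) d
  simp only [Nat.succ_eq_add_one] at h
  rw [hdim, hdim, show p + (d + 1) = (p + d) + 1 from rfl, h]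
  omega

lemma hdim_lt {p : ℕ} (hp : 1 ≤ p) (d : ℕ) : hdim p d < hdim p (d + 1) := by
  rw [hdim_succ]
  have : 0 < Nat.choose (p + d) (d + 1) := Nat.choose_pos (by omega)
  omega

lemma hdim_mono {p : ℕ} (hp : 1 ≤ p) : Monotone (hdim p) :=
  monotone_nat_of_le_succ fun d => (hdim_lt hp d).le

lemma one_le_hdim {p : ℕ} (hp : 1 ≤ p) (d : ℕ) : 1 ≤ hdim p d := by
  have := hdim_mono hp (Nat.zero_le d)
  rw [hdim_zero] at this
  exact this

lemma ldim_succ {p : ℕ} (hp : 1 ≤ p) (k : ℕ) :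
    ldim p (k + 1) = ldim p k + (k + 1) * Nat.choose (p + k) (k + 1) := by
  obtain ⟨q, rfl⟩ : ∃ q, p = q + 1 := ⟨p - 1, by omega⟩
  have h1 := Nat.add_one_mul_choose_eq (q + k) k
  have h2 := Nat.add_one_mul_choose_eq (q + k) q
  have h3 : Nat.choose (q + k) k = Nat.choose (q + k) q := by
    rw [Nat.add_comm q k]; exact Nat.choose_symm_add
  have key : (k + 1) * Nat.choose (q + 1 + k) (k + 1)
      = (q + 1) * Nat.choose (q + 1 + k) (q + 1) := by
    have e : q + 1 + k = q + k + 1 := by omega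
    rw [e]
    calc (k + 1) * Nat.choose (q + k + 1) (k + 1)
        = (q + k + 1) * Nat.choose (q + k) k := by rw [mul_comm, ← h1]
      _ = (q + k + 1) * Nat.choose (q + k) q := by rw [h3]
      _ = (q + 1) * Nat.choose (q + k + 1) (q + 1) := by rw [h2]; ring
  have hcs : Nat.choose (q + 1 + k + 1) (q + 1 + 1)
      = Nat.choose (q + 1 + k) (q + 1) + Nat.choose (q + 1 + k) (q + 1 + 1) := by
    have h := Nat.choose_succ_succ (q + 1 + k) (q + 1)
    simpa [Nat.succ_eq_add_one] using h
  calc ldim (q + 1) (k + 1)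
      = (q + 1) * (Nat.choose (q + 1 + k) (q + 1) + Nat.choose (q + 1 + k) (q + 1 + 1)) := by
        rw [ldim, show q + 1 + (k + 1) = (q + 1 + k) + 1 from rfl, hcs]
    _ = (q + 1) * Nat.choose (q + 1 + k) (q + 1 + 1)
          + (q + 1) * Nat.choose (q + 1 + k) (q + 1) := by ring
    _ = ldim (q + 1) k + (k + 1) * Nat.choose (q + 1 + k) (k + 1) := by
        rw [ldim, ← key]

lemma ldim_eq {p : ℕ} (hp : 1 ≤ p) (d : ℕ) :
    ∑ e ∈ Finset.Ioc 0 d, e * (hdim p e - hdim p (e - 1)) = ldim p d := by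
  induction d with
  | zero =>
    simp [ldim, Nat.choose_eq_zero_of_lt (by omega : p < p + 1)]
  | succ k ih =>
    rw [← Finset.sum_Ioc_consecutive _ (Nat.zero_le k) (Nat.le_succ k),
      show Finset.Ioc k (k + 1) = {k + 1} from by rw [Nat.Ioc_succ_singleton],
      Finset.sum_singleton, ih]
    have hsub : hdim p (k + 1) - hdim p (k + 1 - 1) = Nat.choose (p + k) (k + 1) := by
      rw [show k + 1 - 1 = k from rfl, hdim_succ]
      omega
    rw [hsub, ldim_succ hp k]

lemma one_le_csub {p : ℕ} (hp : 1 ≤ p) {e : ℕ} (he : 1 ≤ e) :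
    1 ≤ hdim p e - hdim p (e - 1) := by
  obtain ⟨k, rfl⟩ : ∃ k, e = k + 1 := ⟨e - 1, by omega⟩
  have := hdim_lt hp k
  simp only [Nat.add_sub_cancel]
  omega

lemma le_ldim {p : ℕ} (hp : 1 ≤ p) (d : ℕ) : d ≤ ldim p d := by
  rw [← ldim_eq hp d]
  calc d = ∑ _e ∈ Finset.Ioc 0 d, 1 := by simp
    _ ≤ ∑ e ∈ Finset.Ioc 0 d, e * (hdim p e - hdim p (e - 1)) := by
      refine Finset.sum_le_sum fun e he => ?_
      have h1 : 1 ≤ e := (Finset.mem_Ioc.mp he).1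
      have h2 := one_le_csub hp h1
      exact Nat.one_le_iff_ne_zero.mpr (Nat.mul_ne_zero (by omega) (by omega))

lemma ldim_pos {p : ℕ} (hp : 1 ≤ p) {d : ℕ} (hd : 1 ≤ d) : 0 < ldim p d :=
  lt_of_lt_of_le hd (le_ldim hp d)

noncomputable def msup (p : ℕ) (M : ℕ → ℝ) (e : ℕ) : ℝ :=
  sSup (M '' Set.Ico (hdim p (e - 1)) (hdim p e))

lemma one_le_msup {p : ℕ} (hp : 1 ≤ p) {M : ℕ → ℝ} (hM1 : ∀ j, 1 ≤ j → 1 ≤ M j)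
    {e : ℕ} (he : 1 ≤ e) : 1 ≤ msup p M e := by
  obtain ⟨k, rfl⟩ : ∃ k, e = k + 1 := ⟨e - 1, by omega⟩
  have hlt : hdim p (k + 1 - 1) < hdim p (k + 1) := by
    simpa using hdim_lt hp k
  have hmem : M (hdim p (k + 1 - 1)) ∈ M '' Set.Ico (hdim p (k + 1 - 1)) (hdim p (k + 1)) :=
    ⟨_, ⟨le_rfl, hlt⟩, rfl⟩
  exact le_trans (hM1 _ (one_le_hdim hp _))
    (le_csSup ((Set.finite_Ico _ _).image M).bddAbove hmem)

lemma prod_M_le_blocks {p : ℕ} (hp : 1 ≤ p) {M : ℕ → ℝ} (hM1 : ∀ j, 1 ≤ j → 1 ≤ M j) :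
    ∀ d, (∏ j ∈ Finset.Ico 1 (hdim p d), M j) ≤
      ∏ e ∈ Finset.Ioc 0 d, (msup p M e) ^ (hdim p e - hdim p (e - 1)) := by
  intro d
  induction d with
  | zero => rw [hdim_zero]; simp
  | succ k ih =>
    rw [← Finset.prod_Ico_consecutive M (one_le_hdim hp k) (hdim_mono hp (Nat.le_succ k)),
      ← Finset.prod_Ioc_consecutive _ (Nat.zero_le k) (Nat.le_succ k),
      Nat.Ioc_succ_singleton, Finset.prod_singleton]
    have hM0 : ∀ j ∈ Finset.Ico (hdim p k) (hdim p (k + 1)), 0 ≤ M j := fun j hj =>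
      le_trans zero_le_one
        (hM1 j (le_trans (one_le_hdim hp k) (Finset.mem_Ico.mp hj).1))
    have hblock : (∏ j ∈ Finset.Ico (hdim p k) (hdim p (k + 1)), M j)
        ≤ (msup p M (k + 1)) ^ (hdim p (k + 1) - hdim p (k + 1 - 1)) := by
      have hle : ∀ j ∈ Finset.Ico (hdim p k) (hdim p (k + 1)), M j ≤ msup p M (k + 1) := by
        intro j hj
        refine le_csSup ((Set.finite_Ico _ _).image M).bddAbove ⟨j, ?_, rfl⟩
        simp only [Nat.add_sub_cancel]
        exact Finset.mem_Ico.mp hj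
      calc (∏ j ∈ Finset.Ico (hdim p k) (hdim p (k + 1)), M j)
          ≤ ∏ _j ∈ Finset.Ico (hdim p k) (hdim p (k + 1)), msup p M (k + 1) :=
            Finset.prod_le_prod hM0 hle
        _ = (msup p M (k + 1)) ^ (hdim p (k + 1) - hdim p (k + 1 - 1)) := by
            rw [Finset.prod_const, Nat.card_Ico, Nat.add_sub_cancel]
    have h2 : 0 ≤ ∏ j ∈ Finset.Ico (hdim p k) (hdim p (k + 1)), M j :=
      Finset.prod_nonneg hM0
    have h3 : 0 ≤ ∏ e ∈ Finset.Ioc 0 k, msup p M e ^ (hdim p e - hdim p (e - 1)) :=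
      Finset.prod_nonneg fun e he => pow_nonneg
        (le_trans zero_le_one (one_le_msup hp hM1 (Finset.mem_Ioc.mp he).1)) _
    have h4 : (∏ j ∈ Finset.Ico 1 (hdim p k), M j) ≤
        ∏ e ∈ Finset.Ioc 0 k, msup p M e ^ (hdim p e - hdim p (e - 1)) := ih
    exact mul_le_mul h4 hblock h2 h3

lemma tendsto_prodM {p : ℕ} (hp : 1 ≤ p) {M : ℕ → ℝ} (hM1 : ∀ j, 1 ≤ j → 1 ≤ M j)
    (hEdrei : Filter.Tendsto (fun d : ℕ => (msup p M d) ^ ((d : ℝ)⁻¹))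
      Filter.atTop (nhds 1)) :
    Filter.Tendsto
      (fun d : ℕ => (∏ j ∈ Finset.Ico 1 (hdim p d), M j) ^ ((ldim p d : ℝ)⁻¹))
      Filter.atTop (nhds 1) := by
  have hQ1 : ∀ d, 1 ≤ ∏ j ∈ Finset.Ico 1 (hdim p d), M j := by
    intro d
    have h := Finset.prod_le_prod (f := fun _ : ℕ => (1:ℝ)) (g := M)
      (s := Finset.Ico 1 (hdim p d))
      (fun j _ => zero_le_one) (fun j hj => hM1 j (Finset.mem_Ico.mp hj).1)
    simpa using h
  have hQ0 : ∀ d, (0:ℝ) < ∏ j ∈ Finset.Ico 1 (hdim p d), M j := fun d =>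
    lt_of_lt_of_le zero_lt_one (hQ1 d)
  -- log of msup tends to zero after rescaling
  have hlog : Filter.Tendsto (fun e : ℕ => (e : ℝ)⁻¹ * Real.log (msup p M e))
      Filter.atTop (nhds 0) := by
    have h1 : Filter.Tendsto (fun e : ℕ => Real.log ((msup p M e) ^ ((e : ℝ)⁻¹)))
        Filter.atTop (nhds 0) := by
      have h2 := (Real.continuousAt_log one_ne_zero).tendsto.comp hEdrei
      simpa [Function.comp_def] using h2
    refine h1.congr' ?_
    filter_upwards [eventually_ge_atTop 1] with e he
    rw [Real.log_rpow (lt_of_lt_of_le zero_lt_one (one_le_msup hp hM1 he))]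
  -- the weighted sum S d
  set S : ℕ → ℝ := fun d => ∑ e ∈ Finset.Ioc 0 d,
    ((hdim p e - hdim p (e - 1) : ℕ) : ℝ) * Real.log (msup p M e) with hS
  have hS0 : ∀ d, 0 ≤ S d := by
    intro d
    refine Finset.sum_nonneg fun e he => mul_nonneg (Nat.cast_nonneg _)
      (Real.log_nonneg (one_le_msup hp hM1 (Finset.mem_Ioc.mp he).1))
  have hLS : ∀ d, Real.log (∏ j ∈ Finset.Ico 1 (hdim p d), M j) ≤ S d := by
    intro d
    have h1 := Real.log_le_log (hQ0 d) (prod_M_le_blocks hp hM1 d)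
    have h2 : Real.log (∏ e ∈ Finset.Ioc 0 d, msup p M e ^ (hdim p e - hdim p (e - 1)))
        = S d := by
      rw [Real.log_prod]
      · exact Finset.sum_congr rfl fun e he => Real.log_pow _ _
      · intro e he
        have h3 := one_le_msup hp hM1 (Finset.mem_Ioc.mp he).1
        exact pow_ne_zero _ (ne_of_gt (lt_of_lt_of_le zero_lt_one h3))
    exact h2 ▸ h1
  have hT : Filter.Tendsto
      (fun d : ℕ => Real.log (∏ j ∈ Finset.Ico 1 (hdim p d), M j) * ((ldim p d : ℝ))⁻¹)
      Filter.atTop (nhds 0) := by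
    have hU : Filter.Tendsto (fun d : ℕ => S d * ((ldim p d : ℝ))⁻¹)
        Filter.atTop (nhds 0) := by
      rw [Metric.tendsto_atTop]
      intro ε hε
      rw [Metric.tendsto_atTop] at hlog
      obtain ⟨E0, hE0⟩ := hlog (ε / 2) (by linarith)
      set E := max E0 1 with hE
      have hkey : ∀ e, E ≤ e → Real.log (msup p M e) ≤ ε / 2 * e := by
        intro e he
        have h1 := hE0 e (le_trans (le_max_left _ _) he)
        have he1 : 1 ≤ e := le_trans (le_max_right _ _) he
        have he0 : (0:ℝ) < e := by exact_mod_cast he1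
        rw [Real.dist_eq, sub_zero] at h1
        have h3 : (e:ℝ)⁻¹ * Real.log (msup p M e) < ε / 2 :=
          lt_of_le_of_lt (le_abs_self _) h1
        calc Real.log (msup p M e)
            = (e:ℝ) * ((e:ℝ)⁻¹ * Real.log (msup p M e)) := by field_simp
          _ ≤ (e:ℝ) * (ε / 2) := mul_le_mul_of_nonneg_left (le_of_lt h3) (le_of_lt he0)
          _ = ε / 2 * e := by ring
      set C := S E with hC
      have hC0 : 0 ≤ C := hS0 E
      obtain ⟨N0, hN0⟩ := exists_nat_gt (2 * C / ε)
      refine ⟨max (max E 1) N0, fun d hd => ?_⟩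
      have hdE : E ≤ d := le_trans (le_trans (le_max_left _ _) (le_max_left _ _)) hd
      have hd1 : 1 ≤ d := le_trans (le_trans (le_max_right _ _) (le_max_left _ _)) hd
      have hdN : N0 ≤ d := le_trans (le_max_right _ _) hd
      have hld : 0 < ldim p d := ldim_pos hp hd1
      have hldR : (0:ℝ) < (ldim p d : ℝ) := by exact_mod_cast hld
      have hSd : S d ≤ C + ε / 2 * (ldim p d : ℝ) := by
        have hsplit : S d = C + ∑ e ∈ Finset.Ioc E d,
            ((hdim p e - hdim p (e - 1) : ℕ) : ℝ) * Real.log (msup p M e) := by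
          rw [hC, hS]
          dsimp only
          rw [← Finset.sum_Ioc_consecutive _ (Nat.zero_le E) hdE]
        rw [hsplit]
        have hb1 : ∑ e ∈ Finset.Ioc E d,
              ((hdim p e - hdim p (e - 1) : ℕ) : ℝ) * Real.log (msup p M e)
            ≤ ∑ e ∈ Finset.Ioc E d,
              ((hdim p e - hdim p (e - 1) : ℕ) : ℝ) * (ε / 2 * e) :=
          Finset.sum_le_sum fun e he =>
            mul_le_mul_of_nonneg_left (hkey e (Finset.mem_Ioc.mp he).1.le)
              (Nat.cast_nonneg _)
        have hb2 : ∑ e ∈ Finset.Ioc E d,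
              ((hdim p e - hdim p (e - 1) : ℕ) : ℝ) * (ε / 2 * e)
            = ε / 2 * ∑ e ∈ Finset.Ioc E d,
              (e : ℝ) * ((hdim p e - hdim p (e - 1) : ℕ) : ℝ) := by
          rw [Finset.mul_sum]
          exact Finset.sum_congr rfl fun e _ => by ring
        have hb3 : ∑ e ∈ Finset.Ioc E d,
              (e : ℝ) * ((hdim p e - hdim p (e - 1) : ℕ) : ℝ)
            ≤ ∑ e ∈ Finset.Ioc 0 d,
              (e : ℝ) * ((hdim p e - hdim p (e - 1) : ℕ) : ℝ) := by
          refine Finset.sum_le_sum_of_subset_of_nonneg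
            (Finset.Ioc_subset_Ioc (Nat.zero_le E) le_rfl) ?_
          intro e _ _
          exact mul_nonneg (Nat.cast_nonneg _) (Nat.cast_nonneg _)
        have hb4 : ∑ e ∈ Finset.Ioc 0 d,
              (e : ℝ) * ((hdim p e - hdim p (e - 1) : ℕ) : ℝ) = (ldim p d : ℝ) := by
          rw [← ldim_eq hp d, Nat.cast_sum]
          exact Finset.sum_congr rfl fun e _ => by rw [Nat.cast_mul]
        have hε2 : (0:ℝ) ≤ ε / 2 := by linarith
        have := mul_le_mul_of_nonneg_left (hb3.trans_eq hb4) hε2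
        linarith
      have h6 : (C + ε / 2 * (ldim p d : ℝ)) * ((ldim p d : ℝ))⁻¹
          = C * ((ldim p d : ℝ))⁻¹ + ε / 2 := by
        rw [add_mul, mul_inv_cancel_right₀ (ne_of_gt hldR)]
      have h7 : C * ((ldim p d : ℝ))⁻¹ < ε / 2 := by
        have h8 : 2 * C / ε < (ldim p d : ℝ) := by
          have h9 : (N0 : ℝ) ≤ (d : ℝ) := by exact_mod_cast hdN
          have h10 : (d : ℝ) ≤ (ldim p d : ℝ) := by exact_mod_cast le_ldim hp d
          linarith
        have h11 : 2 * C < (ldim p d : ℝ) * ε := (div_lt_iff₀ hε).mp h8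
        rw [mul_inv_lt_iff₀ hldR]
        linarith
      have h5 : S d * ((ldim p d : ℝ))⁻¹ ≤ (C + ε / 2 * (ldim p d : ℝ)) * ((ldim p d : ℝ))⁻¹ :=
        mul_le_mul_of_nonneg_right hSd (inv_nonneg.mpr hldR.le)
      rw [Real.dist_eq, sub_zero,
        abs_of_nonneg (mul_nonneg (hS0 d) (inv_nonneg.mpr hldR.le))]
      linarith
    refine tendsto_of_tendsto_of_tendsto_of_le_of_le tendsto_const_nhds hU ?_ ?_
    · intro d
      exact mul_nonneg (Real.log_nonneg (hQ1 d)) (inv_nonneg.mpr (Nat.cast_nonneg _))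
    · intro d
      exact mul_le_mul_of_nonneg_right (hLS d) (inv_nonneg.mpr (Nat.cast_nonneg _))
  have hexp := (Real.continuous_exp.tendsto 0).comp hT
  rw [Real.exp_zero] at hexp
  refine hexp.congr fun d => ?_
  exact (Real.rpow_def_of_pos (hQ0 d) _).symm

/-- a pseudo Leja sequence recovers the transfinite diameter `D = D(K)`:
if `V_{h_d}(K)^{1/l_d} → D` and `(∏_{j=1}^{h_d-1} θ_j(K))^{1/l_d} → D` (which hold, with
`D = D(K)`, by Zaharjuta's theorem), then `|vdm(ξ_0,…,ξ_{h_d-1})|^{1/l_d} → D`. -/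
theorem pseudoLeja_recovers_transfinite_diameter {p : ℕ} (hp : 1 ≤ p)
    (κ : ℕ → Fin p → ℕ) (hκ : IsGLexEnum κ)
    (K : Set (Fin p → ℂ)) (hKc : IsCompact K) (hKd : Determining K)
    (ξ : ℕ → Fin p → ℂ) (M : ℕ → ℝ) (hPL : IsPseudoLeja κ K ξ M)
    (D : ℝ) (hD : 0 ≤ D)
    (hV : Filter.Tendsto (fun d : ℕ => (Vsup κ K (hdim p d)) ^ ((ldim p d : ℝ)⁻¹))
      Filter.atTop (nhds D))
    (hθ : Filter.Tendsto
      (fun d : ℕ => (∏ j ∈ Finset.Ico 1 (hdim p d), cheb κ K j) ^ ((ldim p d : ℝ)⁻¹))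
      Filter.atTop (nhds D)) :
    Filter.Tendsto
      (fun d : ℕ => ‖vdm κ (hdim p d) ξ‖ ^ ((ldim p d : ℝ)⁻¹))
      Filter.atTop (nhds D) := by
  obtain ⟨hmem, hM1, hineq, hEdrei⟩ := hPL
  have hP : Filter.Tendsto
      (fun d : ℕ => (∏ j ∈ Finset.Ico 1 (hdim p d), M j) ^ ((ldim p d : ℝ)⁻¹))
      Filter.atTop (nhds 1) := by
    refine tendsto_prodM hp hM1 ?_
    exact hEdrei
  have hupper : ∀ d : ℕ,
      ‖vdm κ (hdim p d) ξ‖ ^ ((ldim p d : ℝ)⁻¹) ≤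
        (Vsup κ K (hdim p d)) ^ ((ldim p d : ℝ)⁻¹) := fun d =>
    Real.rpow_le_rpow (norm_nonneg _) (abs_vdm_le_Vsup κ hKc hmem _)
      (inv_nonneg.mpr (Nat.cast_nonneg _))
  have hlower : ∀ d : ℕ,
      (∏ j ∈ Finset.Ico 1 (hdim p d), cheb κ K j) ^ ((ldim p d : ℝ)⁻¹) *
        (((∏ j ∈ Finset.Ico 1 (hdim p d), M j) ^ ((ldim p d : ℝ)⁻¹))⁻¹) ≤
        ‖vdm κ (hdim p d) ξ‖ ^ ((ldim p d : ℝ)⁻¹) := by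
    intro d
    have htel := telescope hκ hKd hmem hM1 hineq (hdim p d)
    have hθ0 : 0 ≤ ∏ j ∈ Finset.Ico 1 (hdim p d), cheb κ K j :=
      Finset.prod_nonneg fun j _ => cheb_nonneg κ K j
    have hQ1 : (1:ℝ) ≤ ∏ j ∈ Finset.Ico 1 (hdim p d), M j := by
      have h := Finset.prod_le_prod (f := fun _ : ℕ => (1:ℝ)) (g := M)
        (s := Finset.Ico 1 (hdim p d))
        (fun j _ => zero_le_one) (fun j hj => hM1 j (Finset.mem_Ico.mp hj).1)
      simpa using h
    have hQ0 : (0:ℝ) < ∏ j ∈ Finset.Ico 1 (hdim p d), M j :=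
      lt_of_lt_of_le zero_lt_one hQ1
    have h1 := Real.rpow_le_rpow hθ0 htel (inv_nonneg.mpr (Nat.cast_nonneg (ldim p d)))
    rw [Real.mul_rpow hQ0.le (norm_nonneg _)] at h1
    have hPd : (0:ℝ) < (∏ j ∈ Finset.Ico 1 (hdim p d), M j) ^ ((ldim p d : ℝ)⁻¹) :=
      Real.rpow_pos_of_pos hQ0 _
    calc (∏ j ∈ Finset.Ico 1 (hdim p d), cheb κ K j) ^ ((ldim p d : ℝ)⁻¹) *
          (((∏ j ∈ Finset.Ico 1 (hdim p d), M j) ^ ((ldim p d : ℝ)⁻¹))⁻¹)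
        ≤ (((∏ j ∈ Finset.Ico 1 (hdim p d), M j) ^ ((ldim p d : ℝ)⁻¹)) *
            ‖vdm κ (hdim p d) ξ‖ ^ ((ldim p d : ℝ)⁻¹)) *
          (((∏ j ∈ Finset.Ico 1 (hdim p d), M j) ^ ((ldim p d : ℝ)⁻¹))⁻¹) :=
          mul_le_mul_of_nonneg_right h1 (inv_nonneg.mpr hPd.le)
      _ = ‖vdm κ (hdim p d) ξ‖ ^ ((ldim p d : ℝ)⁻¹) := by
          rw [mul_comm ((∏ j ∈ Finset.Ico 1 (hdim p d), M j) ^ ((ldim p d : ℝ)⁻¹)),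
            mul_inv_cancel_right₀ (ne_of_gt hPd)]
  have hlow : Filter.Tendsto
      (fun d : ℕ => (∏ j ∈ Finset.Ico 1 (hdim p d), cheb κ K j) ^ ((ldim p d : ℝ)⁻¹) *
        (((∏ j ∈ Finset.Ico 1 (hdim p d), M j) ^ ((ldim p d : ℝ)⁻¹))⁻¹))
      Filter.atTop (nhds D) := by
    have h := hθ.mul (hP.inv₀ one_ne_zero)
    simpa using h
  exact tendsto_of_tendsto_of_tendsto_of_le_of_le hlow hV hlower hupper


end PseudoLeja
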